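/- Let t ≥ 2 be an integer and let χ denote the chromatic number of the generalized Kneser graph K(2t, t, 2). For any instance with two groups of agents containing at most χ − 1 agents in total, where all agents have monotonic, normalized valuations over a finite set G of goods with |G| ∈ {2t−1, 2t}, there exists an allocation (B₁, B₂) of G to the two groups with ||B₁| − |B₂|| ≤ 1 that is EF1 for every agent. -/

import Mathlib

open Finset

variable {γ : Type*} [DecidableEq γ]

/-- An allocation is EF1 for an agent with valuation `u` whose group receives `mine`,
the other group receiving `other`. -/
def EF1 (u : Finset γ → ℝ) (mine other : Finset γ) : Prop :=
  ∃ B ⊆ other, B.card ≤ 1 ∧ u (other \ B) ≤ u mine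

/-- A valuation is monotonic if larger sets are weakly more valuable. -/
def Monotonic (u : Finset γ → ℝ) : Prop :=
  ∀ ⦃S T : Finset γ⦄, S ⊆ T → u S ≤ u T

/-- A valuation is normalized if the empty set has value zero. -/
def Normalized (u : Finset γ → ℝ) : Prop :=
  u ∅ = 0

/-- The generalized Kneser graph `K(b, r, s)`: vertices are the `r`-element subsets of a
`b`-element set, and two distinct vertices are adjacent iff the corresponding subsets
intersect in at most `s - 1` elements. -/
def kneserGraph (b r s : ℕ) : SimpleGraph {A : Finset (Fin b) // A.card = r} where
  Adj A B := A ≠ B ∧ ((A : Finset (Fin b)) ∩ (B : Finset (Fin b))).card ≤ s - 1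
  symm := by
    constructor
    rintro A B ⟨h1, h2⟩
    exact ⟨h1.symm, by rwa [Finset.inter_comm]⟩
  loopless := by
    constructor
    rintro A ⟨h1, -⟩
    exact h1 rfl


section AuxPre
variable {β : Type*} {δ : Type*} [Fintype β] [Fintype δ] [DecidableEq β] [DecidableEq δ]

/-- Preimage of a finset under an embedding. -/
def preim (f : δ ↪ β) (A : Finset β) : Finset δ := Finset.univ.filter (fun x => f x ∈ A)

lemma mem_preim {f : δ ↪ β} {A : Finset β} {x : δ} : x ∈ preim f A ↔ f x ∈ A := by
  simp [preim]

lemma card_preim_le (f : δ ↪ β) (A : Finset β) : (preim f A).card ≤ A.card := by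
  classical
  have hsub : (preim f A).map f ⊆ A := by
    intro y hy
    simp only [Finset.mem_map, mem_preim] at hy
    obtain ⟨x, hx, rfl⟩ := hy
    exact hx
  simpa using Finset.card_le_card hsub

lemma notEF1_iff (u : Finset δ → ℝ) (mine other : Finset δ) :
    ¬ EF1 u mine other ↔ ∀ B ⊆ other, B.card ≤ 1 → u mine < u (other \ B) := by
  simp [EF1, not_le]

/-- Key lemma for group-1 agents: a monotone agent cannot fail EF1 at two allocations
coming from adjacent Kneser vertices. -/
lemma key1 (f : δ ↪ β) {A A' : Finset β} (h_u : ((A ∪ A')ᶜ).card ≤ 1)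
    {u : Finset δ → ℝ} (hm : Monotonic u)
    (h1 : ∀ B ⊆ preim f Aᶜ, B.card ≤ 1 → u (preim f A) < u (preim f Aᶜ \ B))
    (h2 : ∀ B ⊆ preim f A'ᶜ, B.card ≤ 1 → u (preim f A') < u (preim f A'ᶜ \ B)) :
    False := by
  classical
  have step : ∀ (X Y : Finset β), ((X ∪ Y)ᶜ).card ≤ 1 →
      (∀ B ⊆ preim f Xᶜ, B.card ≤ 1 → u (preim f X) < u (preim f Xᶜ \ B)) →
      u (preim f X) < u (preim f Y) := by
    intro X Y hXY hfail
    set S : Finset δ := preim f Xᶜ \ preim f Y with hS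
    have hSsub : S ⊆ preim f ((X ∪ Y)ᶜ) := by
      intro x hx
      simp only [hS, Finset.mem_sdiff, mem_preim, Finset.mem_compl, Finset.mem_union] at *
      tauto
    have hScard : S.card ≤ 1 :=
      le_trans (le_trans (Finset.card_le_card hSsub) (card_preim_le f _)) hXY
    have hsub2 : preim f Xᶜ \ S ⊆ preim f Y := by
      intro x hx
      simp only [hS, Finset.mem_sdiff, mem_preim, Finset.mem_compl] at *
      tauto
    calc u (preim f X) < u (preim f Xᶜ \ S) := hfail S Finset.sdiff_subset hScard
      _ ≤ u (preim f Y) := hm hsub2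
  have hc1 : ((A ∪ A')ᶜ).card ≤ 1 := h_u
  have hc2 : ((A' ∪ A)ᶜ).card ≤ 1 := by rwa [Finset.union_comm]
  have l1 := step A A' hc1 h1
  have l2 := step A' A hc2 h2
  linarith

/-- Key lemma for group-2 agents. -/
lemma key2 (f : δ ↪ β) {A A' : Finset β} (h_i : (A ∩ A').card ≤ 1)
    {u : Finset δ → ℝ} (hm : Monotonic u)
    (h1 : ∀ B ⊆ preim f A, B.card ≤ 1 → u (preim f Aᶜ) < u (preim f A \ B))
    (h2 : ∀ B ⊆ preim f A', B.card ≤ 1 → u (preim f A'ᶜ) < u (preim f A' \ B)) :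
    False := by
  classical
  have step : ∀ (X Y : Finset β), ((X ∩ Y)).card ≤ 1 →
      (∀ B ⊆ preim f X, B.card ≤ 1 → u (preim f Xᶜ) < u (preim f X \ B)) →
      u (preim f Xᶜ) < u (preim f Yᶜ) := by
    intro X Y hXY hfail
    set S : Finset δ := preim f X ∩ preim f Y with hS
    have hSsub : S ⊆ preim f (X ∩ Y) := by
      intro x hx
      simp only [hS, Finset.mem_inter, mem_preim] at *
      tauto
    have hScard : S.card ≤ 1 :=
      le_trans (le_trans (Finset.card_le_card hSsub) (card_preim_le f _)) hXY
    have hsub2 : preim f X \ S ⊆ preim f Yᶜ := by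
      intro x hx
      simp only [hS, Finset.mem_sdiff, Finset.mem_inter, mem_preim, Finset.mem_compl] at *
      tauto
    calc u (preim f Xᶜ) < u (preim f X \ S) := hfail S Finset.inter_subset_left hScard
      _ ≤ u (preim f Yᶜ) := hm hsub2
  have hc2 : (A' ∩ A).card ≤ 1 := by rwa [Finset.inter_comm]
  have l1 := step A A' h_i h1
  have l2 := step A' A hc2 h2
  linarith

end AuxPre

/-- Let χ be the chromatic number of the generalized Kneser graph K(2t, t, 2), t ≥ 2.
For two groups with at most χ - 1 agents in total, monotonic normalized valuations,
and 2t - 1 or 2t goods, a balanced EF1 allocation always exists. -/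
theorem monotonic_EF1_of_chromatic (t : ℕ) (ht : 2 ≤ t) (χ : ℕ)
    (hχ : (kneserGraph (2 * t) t 2).chromaticNumber = (χ : ℕ∞))
    (γ : Type*) [Fintype γ] [DecidableEq γ]
    (hcard : Fintype.card γ = 2 * t - 1 ∨ Fintype.card γ = 2 * t)
    (n₁ n₂ : ℕ) (hn : n₁ + n₂ ≤ χ - 1)
    (u : Fin n₁ → Finset γ → ℝ) (v : Fin n₂ → Finset γ → ℝ)
    (humono : ∀ j, Monotonic (u j)) (hunorm : ∀ j, Normalized (u j))
    (hvmono : ∀ j, Monotonic (v j)) (hvnorm : ∀ j, Normalized (v j)) :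
    ∃ B₁ B₂ : Finset γ, Disjoint B₁ B₂ ∧ B₁ ∪ B₂ = Finset.univ ∧
      |(B₁.card : ℤ) - (B₂.card : ℤ)| ≤ 1 ∧
      (∀ j, EF1 (u j) B₁ B₂) ∧ (∀ j, EF1 (v j) B₂ B₁) := by
    classical
  by_contra hcon
  push_neg at hcon
  -- an embedding of the goods into `Fin (2*t)`
  have hγle : Fintype.card γ ≤ Fintype.card (Fin (2 * t)) := by
    rw [Fintype.card_fin]; rcases hcard with h | h <;> omega
  obtain ⟨f⟩ := Function.Embedding.nonempty_of_card_le hγle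
  -- basic facts about the induced allocation of a t-subset A
  have hdisj : ∀ A : Finset (Fin (2 * t)), Disjoint (preim f A) (preim f Aᶜ) := by
    intro A
    rw [Finset.disjoint_left]
    intro x hx hx'
    rw [mem_preim] at hx hx'
    simp at hx'
    exact hx' hx
  have huniv : ∀ A : Finset (Fin (2 * t)), preim f A ∪ preim f Aᶜ = Finset.univ := by
    intro A
    ext x
    simp [mem_preim, Finset.mem_union]
    tauto
  have hsum : ∀ A : Finset (Fin (2 * t)),
      (preim f A).card + (preim f Aᶜ).card = Fintype.card γ := by
    intro A
    rw [← Finset.card_union_of_disjoint (hdisj A), huniv A, Finset.card_univ]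
  have hbal : ∀ A : Finset (Fin (2 * t)), A.card = t →
      |((preim f A).card : ℤ) - ((preim f Aᶜ).card : ℤ)| ≤ 1 := by
    intro A hA
    have h1 : (preim f A).card ≤ t := by
      have := card_preim_le f A; omega
    have h2 : (preim f Aᶜ).card ≤ t := by
      have := card_preim_le f Aᶜ
      rw [Finset.card_compl, Fintype.card_fin, hA] at this
      omega
    have h3 := hsum A
    have h4 : 2 * t - 1 ≤ Fintype.card γ := by rcases hcard with h | h <;> omega
    rw [abs_le]
    constructor <;> [skip; skip] <;> omega
  -- every Kneser vertex yields a bad agent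
  have hbad : ∀ A : {A : Finset (Fin (2 * t)) // A.card = t},
      (∃ j, ¬ EF1 (u j) (preim f A.1) (preim f A.1ᶜ)) ∨
      (∃ j, ¬ EF1 (v j) (preim f A.1ᶜ) (preim f A.1)) := by
    rintro ⟨A, hA⟩
    by_contra hb
    push_neg at hb
    obtain ⟨hb1, hb2⟩ := hb
    have h1 : ∀ j, EF1 (u j) (preim f A) (preim f Aᶜ) := fun j => hb1 j
    have h2 : ∀ j, EF1 (v j) (preim f Aᶜ) (preim f A) := fun j => hb2 j
    obtain ⟨j, hj⟩ := hcon (preim f A) (preim f Aᶜ) (hdisj A) (huniv A) (hbal A hA) h1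
    exact hj (h2 j)
  -- construct a proper coloring with n₁ + n₂ colors
  set G := kneserGraph (2 * t) t 2 with hG
  let c : {A : Finset (Fin (2 * t)) // A.card = t} → (Fin n₁ ⊕ Fin n₂) := fun A =>
    if h : ∃ j, ¬ EF1 (u j) (preim f A.1) (preim f A.1ᶜ) then Sum.inl h.choose
    else Sum.inr ((hbad A).resolve_left h).choose
  have hvalid : ∀ {A A' : {A : Finset (Fin (2 * t)) // A.card = t}},
      G.Adj A A' → c A ≠ c A' := by
    intro A A' hadj heq
    obtain ⟨hne, hint⟩ := hadj
    have hint : (A.1 ∩ A'.1).card ≤ 1 := hint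
    have hcup : ((A.1 ∪ A'.1)ᶜ).card ≤ 1 := by
      have h5 := Finset.card_union_add_card_inter A.1 A'.1
      rw [A.2, A'.2] at h5
      rw [Finset.card_compl, Fintype.card_fin]
      omega
    simp only [c] at heq
    by_cases h1 : ∃ j, ¬ EF1 (u j) (preim f A.1) (preim f A.1ᶜ) <;>
      by_cases h2 : ∃ j, ¬ EF1 (u j) (preim f A'.1) (preim f A'.1ᶜ)
    · -- both inl
      rw [dif_pos h1, dif_pos h2, Sum.inl.injEq] at heq
      have s1 := h1.choose_spec
      have s2 := h2.choose_spec
      rw [heq] at s1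
      rw [notEF1_iff] at s1 s2
      exact key1 f hcup (humono _) s1 s2
    · rw [dif_pos h1, dif_neg h2] at heq
      exact Sum.inl_ne_inr heq
    · rw [dif_neg h1, dif_pos h2] at heq
      exact Sum.inr_ne_inl heq
    · -- both inr
      rw [dif_neg h1, dif_neg h2, Sum.inr.injEq] at heq
      have s1 := ((hbad A).resolve_left h1).choose_spec
      have s2 := ((hbad A').resolve_left h2).choose_spec
      rw [heq] at s1
      rw [notEF1_iff] at s1 s2
      exact key2 f hint (hvmono _) s1 s2
  have C : G.Coloring (Fin n₁ ⊕ Fin n₂) := SimpleGraph.Coloring.mk c hvalid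
  have hcol : G.Colorable (n₁ + n₂) := by simpa using C.colorable
  -- the vertex set is nonempty
  have hnonempty : Nonempty {A : Finset (Fin (2 * t)) // A.card = t} := by
    obtain ⟨s, -, hs⟩ := Finset.exists_subset_card_eq (s := (Finset.univ : Finset (Fin (2 * t)))) (n := t)
      (by rw [Finset.card_univ, Fintype.card_fin]; omega)
    exact ⟨⟨s, hs⟩⟩
  have hle : G.chromaticNumber ≤ (n₁ + n₂ : ℕ) := hcol.chromaticNumber_le
  have hpos : 0 < G.chromaticNumber := SimpleGraph.chromaticNumber_pos hcol
  rw [hG, hχ] at hle hpos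
  have hle' : χ ≤ n₁ + n₂ := by exact_mod_cast hle
  have hpos' : 0 < χ := by exact_mod_cast hpos
  omega
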